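/- Suppose ρ: D → ℝ is C¹ and strictly positive on D \ {0}, f: D → ℝⁿ is C¹, β: D → ℝ satisfies β(x) ≥ 1 for all x, and for all x ∈ D \ {0}: div(ρ·f)(x) ≤ β(x)·ρ(x)²·div(ρ⁻¹·f)(x) and div f(x) ≤ 0. Then ⟨grad ρ(x), f(x)⟩ ≤ 0 for all x ∈ D \ {0}. -/

import Mathlib

open scoped BigOperators RealInnerProductSpace

/-- Divergence of a vector field on ℝⁿ. -/
noncomputable def vdiv {n : ℕ} (f : EuclideanSpace ℝ (Fin n) → EuclideanSpace ℝ (Fin n))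
    (x : EuclideanSpace ℝ (Fin n)) : ℝ :=
  ∑ i, fderiv ℝ f x (EuclideanSpace.single i (1:ℝ)) i

lemma self_eq_sum {n : ℕ} (v : EuclideanSpace ℝ (Fin n)) :
    v = ∑ i, v i • EuclideanSpace.single i (1:ℝ) := by
  have := (EuclideanSpace.basisFun (Fin n) ℝ).sum_repr v
  simpa [EuclideanSpace.basisFun_apply, EuclideanSpace.basisFun_repr] using this.symm

lemma clm_apply_eq_sum {n : ℕ} (L : EuclideanSpace ℝ (Fin n) →L[ℝ] ℝ)
    (v : EuclideanSpace ℝ (Fin n)) :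
    L v = ∑ i, v i * L (EuclideanSpace.single i (1:ℝ)) := by
  conv_lhs => rw [self_eq_sum v]
  simp [map_sum]

lemma vdiv_smul {n : ℕ} {c : EuclideanSpace ℝ (Fin n) → ℝ}
    {f : EuclideanSpace ℝ (Fin n) → EuclideanSpace ℝ (Fin n)}
    {x : EuclideanSpace ℝ (Fin n)} (hc : DifferentiableAt ℝ c x)
    (hf : DifferentiableAt ℝ f x) :
    vdiv (fun y => c y • f y) x = c x * vdiv f x + fderiv ℝ c x (f x) := by
  have hd : fderiv ℝ (fun y => c y • f y) x
      = c x • fderiv ℝ f x + (fderiv ℝ c x).smulRight (f x) := fderiv_smul hc hf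
  unfold vdiv
  rw [hd, clm_apply_eq_sum (fderiv ℝ c x) (f x), Finset.mul_sum, ← Finset.sum_add_distrib]
  apply Finset.sum_congr rfl
  intro i _
  simp [mul_comm]

theorem grad_inner_nonpos_case3 {n : ℕ} (D : Set (EuclideanSpace ℝ (Fin n))) (hD : IsOpen D)
    (h0 : (0 : EuclideanSpace ℝ (Fin n)) ∈ D)
    (ρ : EuclideanSpace ℝ (Fin n) → ℝ) (f : EuclideanSpace ℝ (Fin n) → EuclideanSpace ℝ (Fin n))
    (β : EuclideanSpace ℝ (Fin n) → ℝ) (hβ : ∀ x, 1 ≤ β x)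
    (hρ : ContDiffOn ℝ 1 ρ D) (hρpos : ∀ x ∈ D, x ≠ 0 → 0 < ρ x)
    (hf : ContDiffOn ℝ 1 f D)
    (hdiv1 : ∀ x ∈ D, x ≠ 0 →
      vdiv (fun y => ρ y • f y) x ≤ β x * (ρ x) ^ 2 * vdiv (fun y => (ρ y)⁻¹ • f y) x)
    (hdiv2 : ∀ x ∈ D, x ≠ 0 → vdiv f x ≤ 0) :
    ∀ x ∈ D, x ≠ 0 → ⟪gradient ρ x, f x⟫ ≤ 0 := by
  intro x hx hx0
  have hρd : DifferentiableAt ℝ ρ x :=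
    (hρ.contDiffAt (hD.mem_nhds hx)).differentiableAt one_ne_zero
  have hfd : DifferentiableAt ℝ f x :=
    (hf.contDiffAt (hD.mem_nhds hx)).differentiableAt one_ne_zero
  have hρx : 0 < ρ x := hρpos x hx hx0
  have hρne : ρ x ≠ 0 := ne_of_gt hρx
  set g := fderiv ℝ ρ x (f x) with hg
  have hA : vdiv (fun y => ρ y • f y) x = ρ x * vdiv f x + g := vdiv_smul hρd hfd
  have hinv : fderiv ℝ (fun y => (ρ y)⁻¹) x = (-(ρ x ^ 2)⁻¹) • fderiv ℝ ρ x := by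
    have h1 := (hasFDerivAt_inv hρne).comp x hρd.hasFDerivAt
    have h2 : HasFDerivAt (fun y => (ρ y)⁻¹) ((-(ρ x ^ 2)⁻¹) • fderiv ℝ ρ x) x := by
      refine h1.congr_fderiv ?_
      ext v
      simp [mul_comm]
    exact h2.fderiv
  have hB : vdiv (fun y => (ρ y)⁻¹ • f y) x = (ρ x)⁻¹ * vdiv f x + (-(ρ x ^ 2)⁻¹) * g := by
    rw [vdiv_smul (c := fun y => (ρ y)⁻¹) (hρd.inv hρne) hfd, hinv]
    simp [hg]
  have hgrad : ⟪gradient ρ x, f x⟫ = g := InnerProductSpace.toDual_symm_apply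
  rw [hgrad]
  have h1 := hdiv1 x hx hx0
  have h2 := hdiv2 x hx hx0
  rw [hA, hB] at h1
  have hβx := hβ x
  have e1 : ρ x ^ 2 * (ρ x)⁻¹ = ρ x := by field_simp
  have e2 : ρ x ^ 2 * (ρ x ^ 2)⁻¹ = 1 := by field_simp
  have key : β x * ρ x ^ 2 * ((ρ x)⁻¹ * vdiv f x + -(ρ x ^ 2)⁻¹ * g)
      = β x * ρ x * vdiv f x - β x * g := by
    field_simp
    ring
  rw [key] at h1
  nlinarith [mul_nonneg (mul_nonneg (le_of_lt hρx) (sub_nonneg.2 hβx)) (neg_nonneg.2 h2)]
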